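/- Fix k ≥ 2, σ > 0, and pairwise gaps Δ_{ij} ≠ 0 with minimum Δ_min = min_{i<j} |Δ_{ij}|, attained by exactly M_min pairs. Define D(N) = 1 − (2/(k(k−1))) Σ_{i<j} erf²(|Δ_{ij}|√N/(2σ)). Then as N → ∞, D(N) ~ C N^{-1/2} exp(−Δ_min² N/(4σ²)) with C = 8σ M_min / (k(k−1) Δ_min √π). -/

import Mathlib

open Filter MeasureTheory Real

/-- The Gauss error function `erf x = (2/√π) ∫₀ˣ e^{-t²} dt`. -/
noncomputable def erf (x : ℝ) : ℝ :=
  (2 / Real.sqrt Real.pi) * ∫ t in (0:ℝ)..x, Real.exp (-t ^ 2)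

noncomputable def Rr (x : ℝ) : ℝ := ∫ t in Set.Ioi x, Real.exp (-t ^ 2)

lemma exp_neg_sq_eq : (fun t : ℝ => Real.exp (-t ^ 2)) = fun t => Real.exp (-1 * t ^ 2) := by
  funext t; ring_nf

lemma intOn (x : ℝ) : IntegrableOn (fun t : ℝ => Real.exp (-t ^ 2)) (Set.Ioi x) := by
  rw [exp_neg_sq_eq]; exact (integrable_exp_neg_mul_sq one_pos).integrableOn

lemma Rr_lim (x : ℝ) :
    Tendsto (fun y => ∫ t in x..y, Real.exp (-t ^ 2)) atTop (nhds (Rr x)) :=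
  intervalIntegral_tendsto_integral_Ioi x (intOn x) tendsto_id

lemma cont_exp_neg_sq : Continuous (fun t : ℝ => Real.exp (-t ^ 2)) := by
  continuity

lemma Rr_eq (x : ℝ) : Rr x = Rr 0 - ∫ t in (0:ℝ)..x, Real.exp (-t ^ 2) := by
  have h1 := Rr_lim x
  have h2 := (Rr_lim 0).sub_const (∫ t in (0:ℝ)..x, Real.exp (-t ^ 2))
  have h3 : (fun y => ∫ t in x..y, Real.exp (-t ^ 2)) =
      fun y => (∫ t in (0:ℝ)..y, Real.exp (-t ^ 2)) - ∫ t in (0:ℝ)..x, Real.exp (-t ^ 2) := by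
    funext y
    rw [intervalIntegral.integral_interval_sub_left
      (cont_exp_neg_sq.intervalIntegrable 0 y) (cont_exp_neg_sq.intervalIntegrable 0 x)]
  rw [h3] at h1
  exact tendsto_nhds_unique h1 h2

lemma Rr_zero : Rr 0 = Real.sqrt Real.pi / 2 := by
  have := integral_gaussian_Ioi 1
  simp only [neg_one_mul] at this
  unfold Rr
  rw [exp_neg_sq_eq]
  simpa using this

lemma Rr_nonneg (x : ℝ) : 0 ≤ Rr x :=
  setIntegral_nonneg measurableSet_Ioi (fun t _ => (Real.exp_pos _).le)

noncomputable def Gg (x : ℝ) : ℝ := Real.exp (-x ^ 2) / (2 * x)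
noncomputable def Ff (x : ℝ) : ℝ := Real.exp (-x ^ 2) * (1 / (2 * x) - 1 / (4 * x ^ 3))

lemma hasDeriv_exp_neg_sq (t : ℝ) :
    HasDerivAt (fun u : ℝ => Real.exp (-u ^ 2)) (Real.exp (-t ^ 2) * (-(2 * t))) t := by
  have h1 : HasDerivAt (fun u : ℝ => -u ^ 2) (-(2 * t)) t := by
    simpa using (hasDerivAt_pow 2 t).fun_neg
  exact (Real.hasDerivAt_exp (-t ^ 2)).comp t h1

lemma hasDeriv_negGg {t : ℝ} (ht : t ≠ 0) :
    HasDerivAt (fun u => -Gg u) (Real.exp (-t ^ 2) * (1 + 1 / (2 * t ^ 2))) t := by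
  have hd : HasDerivAt (fun u : ℝ => 2 * u) 2 t := by
    simpa using (hasDerivAt_id t).const_mul 2
  have h2t : (2 : ℝ) * t ≠ 0 := by simp [ht]
  have := ((hasDeriv_exp_neg_sq t).fun_div hd h2t).fun_neg
  refine HasDerivAt.congr_deriv this ?_
  have he := Real.exp_pos (-t ^ 2)
  field_simp
  ring

lemma hasDeriv_negFf {t : ℝ} (ht : t ≠ 0) :
    HasDerivAt (fun u => -Ff u) (Real.exp (-t ^ 2) * (1 - 3 / (4 * t ^ 4))) t := by
  have hd : HasDerivAt (fun u : ℝ => 2 * u) 2 t := by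
    simpa using (hasDerivAt_id t).const_mul 2
  have h2t : (2 : ℝ) * t ≠ 0 := by simp [ht]
  have hd3 : HasDerivAt (fun u : ℝ => 4 * u ^ 3) (4 * (3 * t ^ 2)) t := by
    simpa using (hasDerivAt_pow 3 t).const_mul 4
  have h4t : (4 : ℝ) * t ^ 3 ≠ 0 := by simp [ht]
  have hg := ((hasDerivAt_const t (1:ℝ)).fun_div hd h2t).fun_sub
    ((hasDerivAt_const t (1:ℝ)).fun_div hd3 h4t)
  have := ((hasDeriv_exp_neg_sq t).fun_mul hg).fun_neg
  refine HasDerivAt.congr_deriv this ?_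
  have he := Real.exp_pos (-t ^ 2)
  field_simp
  ring

lemma integral_upper {x y : ℝ} (hx : 1 ≤ x) (hxy : x ≤ y) :
    (∫ t in x..y, Real.exp (-t ^ 2)) ≤ Gg x - Gg y := by
  have hIcc : Set.uIcc x y = Set.Icc x y := Set.uIcc_of_le hxy
  have htne : ∀ t ∈ Set.Icc x y, t ≠ 0 := fun t ht =>
    (lt_of_lt_of_le one_pos (hx.trans ht.1)).ne'
  have hcont : ContinuousOn (fun t : ℝ => Real.exp (-t ^ 2) * (1 + 1 / (2 * t ^ 2)))
      (Set.uIcc x y) := by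
    rw [hIcc]
    refine (cont_exp_neg_sq.continuousOn).mul
      (continuousOn_const.add (continuousOn_const.div (by fun_prop) ?_))
    intro t ht
    have := htne t ht
    positivity
  have hftc : (∫ t in x..y, Real.exp (-t ^ 2) * (1 + 1 / (2 * t ^ 2))) = (-Gg y) - (-Gg x) := by
    refine intervalIntegral.integral_eq_sub_of_hasDerivAt
      (fun t ht => hasDeriv_negGg ?_) hcont.intervalIntegrable
    exact htne t (hIcc ▸ ht)
  have hmono : (∫ t in x..y, Real.exp (-t ^ 2)) ≤
      ∫ t in x..y, Real.exp (-t ^ 2) * (1 + 1 / (2 * t ^ 2)) := by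
    refine intervalIntegral.integral_mono_on hxy
      (cont_exp_neg_sq.intervalIntegrable x y) hcont.intervalIntegrable ?_
    intro t ht
    have h0 : (0:ℝ) < t := lt_of_lt_of_le one_pos (hx.trans ht.1)
    have h1 : (0:ℝ) ≤ 1 / (2 * t ^ 2) := by positivity
    nlinarith [Real.exp_pos (-t ^ 2)]
  rw [hftc] at hmono
  linarith

lemma integral_lower {x y : ℝ} (hx : 1 ≤ x) (hxy : x ≤ y) :
    Ff x - Ff y ≤ ∫ t in x..y, Real.exp (-t ^ 2) := by
  have hIcc : Set.uIcc x y = Set.Icc x y := Set.uIcc_of_le hxy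
  have htne : ∀ t ∈ Set.Icc x y, t ≠ 0 := fun t ht =>
    (lt_of_lt_of_le one_pos (hx.trans ht.1)).ne'
  have hcont : ContinuousOn (fun t : ℝ => Real.exp (-t ^ 2) * (1 - 3 / (4 * t ^ 4)))
      (Set.uIcc x y) := by
    rw [hIcc]
    refine (cont_exp_neg_sq.continuousOn).mul
      (continuousOn_const.sub (continuousOn_const.div (by fun_prop) ?_))
    intro t ht
    have := htne t ht
    positivity
  have hftc : (∫ t in x..y, Real.exp (-t ^ 2) * (1 - 3 / (4 * t ^ 4))) = (-Ff y) - (-Ff x) := by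
    refine intervalIntegral.integral_eq_sub_of_hasDerivAt
      (fun t ht => hasDeriv_negFf ?_) hcont.intervalIntegrable
    exact htne t (hIcc ▸ ht)
  have hmono : (∫ t in x..y, Real.exp (-t ^ 2) * (1 - 3 / (4 * t ^ 4))) ≤
      ∫ t in x..y, Real.exp (-t ^ 2) := by
    refine intervalIntegral.integral_mono_on hxy hcont.intervalIntegrable
      (cont_exp_neg_sq.intervalIntegrable x y) ?_
    intro t ht
    have h0 : (0:ℝ) < t := lt_of_lt_of_le one_pos (hx.trans ht.1)
    have h1 : (0:ℝ) ≤ 3 / (4 * t ^ 4) := by positivity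
    nlinarith [Real.exp_pos (-t ^ 2)]
  rw [hftc] at hmono
  linarith

lemma exp_neg_sq_tendsto : Tendsto (fun y : ℝ => Real.exp (-y ^ 2)) atTop (nhds 0) :=
  Real.tendsto_exp_atBot.comp
    (tendsto_neg_atBot_iff.mpr (tendsto_pow_atTop two_ne_zero))

lemma Gg_tendsto : Tendsto Gg atTop (nhds 0) := by
  have hl : Tendsto (fun y : ℝ => 2 * y) atTop atTop :=
    (tendsto_id (α := ℝ)).const_mul_atTop two_pos
  have h2 : Tendsto (fun y : ℝ => (2 * y)⁻¹) atTop (nhds 0) :=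
    tendsto_inv_atTop_zero.comp hl
  have h := exp_neg_sq_tendsto.mul h2
  rw [mul_zero] at h
  have heq : Gg = fun y => Real.exp (-y ^ 2) * (2 * y)⁻¹ := by
    funext y; rw [Gg, div_eq_mul_inv]
  rw [heq]; exact h

lemma Ff_tendsto : Tendsto Ff atTop (nhds 0) := by
  have hl : Tendsto (fun y : ℝ => 2 * y) atTop atTop :=
    (tendsto_id (α := ℝ)).const_mul_atTop two_pos
  have hl3 : Tendsto (fun y : ℝ => 4 * y ^ 3) atTop atTop :=
    (tendsto_pow_atTop three_ne_zero).const_mul_atTop four_pos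
  have h2 : Tendsto (fun y : ℝ => 1 / (2 * y)) atTop (nhds 0) :=
    (tendsto_inv_atTop_zero.comp hl).congr fun y => by simp [Function.comp, one_div]
  have h3 : Tendsto (fun y : ℝ => 1 / (4 * y ^ 3)) atTop (nhds 0) :=
    (tendsto_inv_atTop_zero.comp hl3).congr fun y => by simp [Function.comp, one_div]
  have h := exp_neg_sq_tendsto.mul (h2.sub h3)
  rw [sub_zero, mul_zero] at h
  exact h

lemma Rr_le_Gg {x : ℝ} (hx : 1 ≤ x) : Rr x ≤ Gg x := by
  have h1 : Tendsto (fun y => Gg x - Gg y) atTop (nhds (Gg x - 0)) :=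
    tendsto_const_nhds.sub Gg_tendsto
  rw [sub_zero] at h1
  refine le_of_tendsto_of_tendsto (Rr_lim x) h1 ?_
  filter_upwards [eventually_ge_atTop x] with y hy
  exact integral_upper hx hy

lemma Ff_le_Rr {x : ℝ} (hx : 1 ≤ x) : Ff x ≤ Rr x := by
  have h1 : Tendsto (fun y => Ff x - Ff y) atTop (nhds (Ff x - 0)) :=
    tendsto_const_nhds.sub Ff_tendsto
  rw [sub_zero] at h1
  refine le_of_tendsto_of_tendsto h1 (Rr_lim x) ?_
  filter_upwards [eventually_ge_atTop x] with y hy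
  exact integral_lower hx hy

lemma sqrt_pi_pos : 0 < Real.sqrt Real.pi := Real.sqrt_pos.mpr Real.pi_pos

lemma erf_eq (x : ℝ) : erf x = 1 - 2 / Real.sqrt Real.pi * Rr x := by
  have hπ : Real.sqrt Real.pi ≠ 0 := sqrt_pi_pos.ne'
  rw [erf, show (∫ t in (0:ℝ)..x, Real.exp (-t ^ 2)) = Real.sqrt Real.pi / 2 - Rr x by
    rw [eq_sub_iff_add_eq, ← eq_sub_iff_add_eq', ← Rr_zero, Rr_eq x]]
  field_simp

lemma Rr_tendsto : Tendsto Rr atTop (nhds 0) := by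
  refine tendsto_of_tendsto_of_tendsto_of_le_of_le' tendsto_const_nhds Gg_tendsto
    (Eventually.of_forall Rr_nonneg) ?_
  filter_upwards [eventually_ge_atTop (1:ℝ)] with x hx
  exact Rr_le_Gg hx

lemma erf_tendsto : Tendsto erf atTop (nhds 1) := by
  have h : Tendsto (fun x => 1 - 2 / Real.sqrt Real.pi * Rr x) atTop
      (nhds (1 - 2 / Real.sqrt Real.pi * 0)) :=
    tendsto_const_nhds.sub (Rr_tendsto.const_mul (2 / Real.sqrt Real.pi))
  rw [mul_zero, sub_zero] at h
  exact h.congr fun x => (erf_eq x).symm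

lemma RxE_tendsto : Tendsto (fun x => Rr x * (x * Real.exp (x ^ 2))) atTop (nhds (1 / 2)) := by
  have hl3 : Tendsto (fun y : ℝ => 4 * y ^ 2) atTop atTop :=
    (tendsto_pow_atTop two_ne_zero).const_mul_atTop four_pos
  have h2 : Tendsto (fun y : ℝ => 1 / (4 * y ^ 2)) atTop (nhds 0) :=
    (tendsto_inv_atTop_zero.comp hl3).congr fun y => by simp [Function.comp, one_div]
  have hlow : Tendsto (fun x : ℝ => 1 / 2 - 1 / (4 * x ^ 2)) atTop (nhds (1 / 2 - 0)) :=
    tendsto_const_nhds.sub h2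
  rw [sub_zero] at hlow
  refine tendsto_of_tendsto_of_tendsto_of_le_of_le' hlow tendsto_const_nhds ?_ ?_
  · filter_upwards [eventually_ge_atTop (1:ℝ)] with x hx
    have hx0 : (0:ℝ) < x := lt_of_lt_of_le one_pos hx
    have hE : (0:ℝ) < x * Real.exp (x ^ 2) := by positivity
    have heq : Ff x * (x * Real.exp (x ^ 2)) = 1 / 2 - 1 / (4 * x ^ 2) := by
      rw [Ff, Real.exp_neg]
      have := (Real.exp_pos (x ^ 2)).ne'
      field_simp
    calc 1 / 2 - 1 / (4 * x ^ 2) = Ff x * (x * Real.exp (x ^ 2)) := heq.symm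
      _ ≤ Rr x * (x * Real.exp (x ^ 2)) :=
        mul_le_mul_of_nonneg_right (Ff_le_Rr hx) hE.le
  · filter_upwards [eventually_ge_atTop (1:ℝ)] with x hx
    have hx0 : (0:ℝ) < x := lt_of_lt_of_le one_pos hx
    have hE : (0:ℝ) < x * Real.exp (x ^ 2) := by positivity
    have heq : Gg x * (x * Real.exp (x ^ 2)) = 1 / 2 := by
      rw [Gg, Real.exp_neg]
      have := (Real.exp_pos (x ^ 2)).ne'
      field_simp
    calc Rr x * (x * Real.exp (x ^ 2)) ≤ Gg x * (x * Real.exp (x ^ 2)) :=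
        mul_le_mul_of_nonneg_right (Rr_le_Gg hx) hE.le
      _ = 1 / 2 := heq

lemma H_tendsto : Tendsto
    (fun x => (1 - erf x ^ 2) * (x * Real.exp (x ^ 2)) * Real.sqrt Real.pi / 2)
    atTop (nhds 1) := by
  have h := RxE_tendsto.mul (erf_tendsto.const_add 1)
  norm_num at h
  refine h.congr fun x => ?_
  have hπ : Real.sqrt Real.pi ≠ 0 := sqrt_pi_pos.ne'
  have h1 : 1 - erf x = 2 / Real.sqrt Real.pi * Rr x := by rw [erf_eq x]; ring
  have h2 : 2 / Real.sqrt Real.pi * Real.sqrt Real.pi = 2 := div_mul_cancel₀ 2 hπ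
  calc Rr x * (x * Real.exp (x ^ 2)) * (1 + erf x)
      = (2 / Real.sqrt Real.pi * Real.sqrt Real.pi) *
        (Rr x * (x * Real.exp (x ^ 2)) * (1 + erf x)) / 2 := by rw [h2]; ring
    _ = (2 / Real.sqrt Real.pi * Rr x) * (1 + erf x) *
        (x * Real.exp (x ^ 2)) * Real.sqrt Real.pi / 2 := by ring
    _ = ((1 - erf x) * (1 + erf x)) *
        (x * Real.exp (x ^ 2)) * Real.sqrt Real.pi / 2 := by rw [h1]
    _ = (1 - erf x ^ 2) * (x * Real.exp (x ^ 2)) * Real.sqrt Real.pi / 2 := by ring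

lemma sqrtN_tendsto {a : ℝ} (ha : 0 < a) :
    Tendsto (fun N : ℕ => a * Real.sqrt N) atTop atTop := by
  have hs : Tendsto Real.sqrt atTop atTop :=
    tendsto_atTop_atTop_of_monotone (fun u v huv => Real.sqrt_le_sqrt huv)
      (fun b => ⟨b ^ 2, by rw [Real.sqrt_sq_eq_abs]; exact le_abs_self b⟩)
  exact (hs.comp tendsto_natCast_atTop_atTop).const_mul_atTop ha

lemma two_mul_card_lt_pairs (k : ℕ) :
    2 * (Finset.univ.filter (fun p : Fin k × Fin k => p.1 < p.2)).card = k * (k - 1) := by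
  set S := Finset.univ.filter (fun p : Fin k × Fin k => p.1 < p.2) with hS
  set T := Finset.univ.filter (fun p : Fin k × Fin k => p.2 < p.1) with hT
  have hcard : S.card = T.card := by
    apply Finset.card_bij (fun p _ => Prod.swap p)
    · intro p hp; simp only [hS, hT, Finset.mem_filter, Finset.mem_univ, true_and] at *
      exact hp
    · intro p _ q _ h; exact Prod.swap_injective h
    · intro p hp
      refine ⟨Prod.swap p, ?_, by simp⟩
      simp only [hS, hT, Finset.mem_filter, Finset.mem_univ, true_and] at *
      exact hp
  have hdisj : Disjoint S T := by
    rw [Finset.disjoint_left]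
    intro p hp hq
    simp only [hS, hT, Finset.mem_filter, Finset.mem_univ, true_and] at hp hq
    exact absurd hq (lt_asymm hp)
  have hunion : S ∪ T = (Finset.univ : Finset (Fin k)).offDiag := by
    ext p
    simp only [hS, hT, Finset.mem_union, Finset.mem_filter, Finset.mem_univ, true_and,
      Finset.mem_offDiag]
    exact ⟨fun h => by rcases h with h | h; exacts [ne_of_lt h, ne_of_gt h],
      fun h => lt_or_gt_of_ne h⟩
  have := Finset.card_union_of_disjoint hdisj
  rw [hunion, Finset.offDiag_card, ← hcard] at this
  simp only [Finset.card_univ, Fintype.card_fin] at this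
  have hk : k * (k - 1) = k * k - k := by
    cases k with
    | zero => simp
    | succ n =>
      have h1 : (n + 1) * (n + 1) = (n + 1) * n + (n + 1) := by ring
      simp only [Nat.succ_sub_one]
      omega
  omega

example (k : ℕ) : True := trivial

/-- Asymptotic rate of the expected Kendall-τ disagreement between two independent
benchmarks: `D(N) ~ C N^{-1/2} exp(−Δ_min² N/(4σ²))` with
`C = 8σ M_min/(k(k−1)Δ_min√π)`. -/
theorem kendall_tau_disagreement_asymptotic
    (k : ℕ) (hk : 2 ≤ k) (σ : ℝ) (hσ : 0 < σ)
    (Δ : Fin k → Fin k → ℝ) (hΔ : ∀ i j : Fin k, i < j → Δ i j ≠ 0)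
    (P : Finset (Fin k × Fin k))
    (hP : P = Finset.univ.filter (fun p : Fin k × Fin k => p.1 < p.2))
    (hPne : P.Nonempty)
    (Δmin : ℝ) (hmin : Δmin = P.inf' hPne (fun p => |Δ p.1 p.2|))
    (Mmin : ℕ) (hM : Mmin = (P.filter (fun p => |Δ p.1 p.2| = Δmin)).card) :
    Tendsto (fun N : ℕ =>
        (1 - (2 / ((k : ℝ) * ((k : ℝ) - 1))) *
            ∑ p ∈ P, (erf (|Δ p.1 p.2| * Real.sqrt N / (2 * σ))) ^ 2) /
          ((8 * σ * (Mmin : ℝ) / ((k : ℝ) * ((k : ℝ) - 1) * Δmin * Real.sqrt Real.pi)) /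
              Real.sqrt N * Real.exp (-(Δmin ^ 2 * N) / (4 * σ ^ 2))))
      atTop (nhds 1) := by
  classical
  have hπ : Real.sqrt Real.pi ≠ 0 := sqrt_pi_pos.ne'
  have hk2 : (2:ℝ) ≤ (k:ℝ) := by exact_mod_cast hk
  have hkk : (0:ℝ) < (k:ℝ) * ((k:ℝ) - 1) := by nlinarith
  have hΔpos : ∀ p ∈ P, 0 < |Δ p.1 p.2| := by
    intro p hp
    rw [hP, Finset.mem_filter] at hp
    exact abs_pos.mpr (hΔ p.1 p.2 hp.2)
  have hminpos : 0 < Δmin := by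
    rw [hmin]; exact (Finset.lt_inf'_iff hPne).mpr hΔpos
  have hmin_le : ∀ p ∈ P, Δmin ≤ |Δ p.1 p.2| := by
    intro p hp; rw [hmin]; exact Finset.inf'_le _ hp
  have hMpos : 0 < Mmin := by
    obtain ⟨p, hp, hpe⟩ := Finset.exists_mem_eq_inf' hPne (fun p => |Δ p.1 p.2|)
    rw [hM]
    exact Finset.card_pos.mpr ⟨p, Finset.mem_filter.mpr ⟨hp, by rw [hmin, hpe]⟩⟩
  have hMR : (0:ℝ) < (Mmin : ℝ) := by exact_mod_cast hMpos
  set m : ℝ := Δmin / (2 * σ) with hm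
  have hm0 : 0 < m := by rw [hm]; positivity
  set Cc : ℝ := 8 * σ * (Mmin : ℝ) / ((k : ℝ) * ((k : ℝ) - 1) * Δmin * Real.sqrt Real.pi)
    with hCc
  have hCc0 : 0 < Cc := by
    rw [hCc]
    exact div_pos (mul_pos (by linarith : (0:ℝ) < 8 * σ) hMR)
      (mul_pos (mul_pos hkk hminpos) sqrt_pi_pos)
  set c : ℝ := 2 / ((k : ℝ) * ((k : ℝ) - 1)) with hc
  have hc0 : 0 < c := div_pos two_pos hkk
  have h2card : 2 * P.card = k * (k - 1) := by rw [hP]; exact two_mul_card_lt_pairs k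
  have hccard : c * (P.card : ℝ) = 1 := by
    have h1 : ((k:ℝ) - 1) = ((k - 1 : ℕ) : ℝ) := by
      rw [Nat.cast_sub (by omega : 1 ≤ k), Nat.cast_one]
    have h2 : (2:ℝ) * P.card = (k:ℝ) * ((k:ℝ) - 1) := by
      rw [h1]; exact_mod_cast congrArg (Nat.cast : ℕ → ℝ) h2card
    rw [hc, div_mul_eq_mul_div, h2]; exact div_self hkk.ne'
  set H : ℝ → ℝ :=
    fun x => (1 - erf x ^ 2) * (x * Real.exp (x ^ 2)) * Real.sqrt Real.pi / 2 with hH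
  have hHt : Tendsto H atTop (nhds 1) := by rw [hH]; exact H_tendsto
  set t : (Fin k × Fin k) → ℕ → ℝ := fun p N =>
    c * (1 - erf (|Δ p.1 p.2| * Real.sqrt N / (2 * σ)) ^ 2) /
      (Cc / Real.sqrt N * Real.exp (-(m ^ 2 * N))) with ht
  have hexp_eq : ∀ N : ℕ,
      Real.exp (-(Δmin ^ 2 * N) / (4 * σ ^ 2)) = Real.exp (-(m ^ 2 * N)) := by
    intro N
    congr 1
    rw [hm, div_pow, show ((2:ℝ) * σ) ^ 2 = 4 * σ ^ 2 from by ring,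
      div_mul_eq_mul_div, neg_div]
  have key : ∀ N : ℕ,
      (1 - c * ∑ p ∈ P, (erf (|Δ p.1 p.2| * Real.sqrt N / (2 * σ))) ^ 2) /
        (Cc / Real.sqrt N * Real.exp (-(Δmin ^ 2 * N) / (4 * σ ^ 2))) = ∑ p ∈ P, t p N := by
    intro N
    have hnum : 1 - c * ∑ p ∈ P, (erf (|Δ p.1 p.2| * Real.sqrt N / (2 * σ))) ^ 2
        = ∑ p ∈ P, c * (1 - erf (|Δ p.1 p.2| * Real.sqrt N / (2 * σ)) ^ 2) := by
      rw [← Finset.mul_sum, Finset.sum_sub_distrib, Finset.sum_const, nsmul_eq_mul, mul_one,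
        mul_sub, hccard]
    rw [hexp_eq, hnum, Finset.sum_div]
  refine Tendsto.congr (fun N => (key N).symm) ?_
  have hsum : ∑ p ∈ P, (if |Δ p.1 p.2| = Δmin then ((Mmin:ℝ))⁻¹ else 0) = 1 := by
    rw [← Finset.sum_filter, Finset.sum_const, ← hM, nsmul_eq_mul]
    exact mul_inv_cancel₀ hMR.ne'
  rw [show nhds (1:ℝ) =
      nhds (∑ p ∈ P, (if |Δ p.1 p.2| = Δmin then ((Mmin:ℝ))⁻¹ else 0)) by rw [hsum]]
  apply tendsto_finset_sum
  intro p hp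
  set a : ℝ := |Δ p.1 p.2| / (2 * σ) with haA
  have ha0 : 0 < a := by
    rw [haA]; exact div_pos (hΔpos p hp) (by linarith)
  have ham : m ≤ a := by
    rw [hm, haA]
    exact div_le_div_of_nonneg_right (hmin_le p hp) (by linarith)
  have hHa : Tendsto (fun N : ℕ => H (a * Real.sqrt N)) atTop (nhds 1) :=
    (hHt.comp (sqrtN_tendsto ha0)).congr fun N => rfl
  have hptw : ∀ N : ℕ, 1 ≤ N → t p N =
      (2 * c / (Real.sqrt Real.pi * a * Cc)) * H (a * Real.sqrt N) *
        Real.exp ((m ^ 2 - a ^ 2) * N) := by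
    intro N hN
    have hN0 : (0:ℝ) < (N:ℝ) := by exact_mod_cast hN
    have hsN : 0 < Real.sqrt N := Real.sqrt_pos.mpr hN0
    have hxarg : |Δ p.1 p.2| * Real.sqrt N / (2 * σ) = a * Real.sqrt N := by
      rw [haA]; ring
    have hsq : (a * Real.sqrt N) ^ 2 = a ^ 2 * N := by
      rw [mul_pow, Real.sq_sqrt (Nat.cast_nonneg N)]
    have hE3 : Real.exp ((m ^ 2 - a ^ 2) * N) =
        (Real.exp (-(m ^ 2 * N)))⁻¹ * (Real.exp (a ^ 2 * N))⁻¹ := by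
      rw [← Real.exp_neg, ← Real.exp_neg, ← Real.exp_add]; congr 1; ring
    simp only [ht, hH]
    rw [hxarg, hE3, hsq]
    have hex1 := Real.exp_ne_zero (-(m ^ 2 * (N:ℝ)))
    have hex2 := Real.exp_ne_zero (a ^ 2 * (N:ℝ))
    field_simp
  by_cases hcase : |Δ p.1 p.2| = Δmin
  · rw [if_pos hcase]
    have haem : a = m := by rw [haA, hm, hcase]
    have hKK : 2 * c / (Real.sqrt Real.pi * a * Cc) = (Mmin:ℝ)⁻¹ := by
      rw [haem, hm, hc, hCc]
      have hk0 : (k:ℝ) ≠ 0 := by linarith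
      have hk1 : (k:ℝ) - 1 ≠ 0 := by linarith
      field_simp
      ring
    have h1 : Tendsto (fun N : ℕ => (Mmin:ℝ)⁻¹ * H (a * Real.sqrt N)) atTop
        (nhds ((Mmin:ℝ)⁻¹ * 1)) := hHa.const_mul _
    rw [mul_one] at h1
    refine Tendsto.congr' ?_ h1
    filter_upwards [eventually_ge_atTop 1] with N hN
    rw [hptw N hN, hKK, haem]
    simp
  · rw [if_neg hcase]
    have hma : m < a := by
      refine lt_of_le_of_ne ham fun he => hcase ?_
      have h2σ : (2 * σ) ≠ 0 := by linarith
      have h1 : a * (2 * σ) = |Δ p.1 p.2| := by rw [haA]; field_simp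
      have h2 : m * (2 * σ) = Δmin := by rw [hm]; field_simp
      rw [← h1, ← he, h2]
    have hexp0 : Tendsto (fun N : ℕ => Real.exp ((m ^ 2 - a ^ 2) * N)) atTop (nhds 0) := by
      have hneg : m ^ 2 - a ^ 2 < 0 := by nlinarith
      have hbot : Tendsto (fun N : ℕ => (m ^ 2 - a ^ 2) * (N:ℝ)) atTop atBot :=
        tendsto_natCast_atTop_atTop.const_mul_atTop_of_neg hneg
      exact (Real.tendsto_exp_atBot.comp hbot).congr fun N => rfl
    have hlim := (hHa.mul hexp0).const_mul (2 * c / (Real.sqrt Real.pi * a * Cc))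
    rw [mul_zero, mul_zero] at hlim
    refine Tendsto.congr' ?_ hlim
    filter_upwards [eventually_ge_atTop 1] with N hN
    rw [hptw N hN]
    ring
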